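/- Let Γ be a group, let p be a prime, and let F be a field of characteristic p. Then the group ring F[Γ] is stably finite if and only if the group ring 𝔽_p[Γ] is stably finite, where 𝔽_p = ZMod p. -/

import Mathlib

/-- A group is Hopfian if every surjective endomorphism is injective. -/
def IsHopfian (G : Type*) [Group G] : Prop :=
  ∀ φ : G →* G, Function.Surjective φ → Function.Injective φ

/-- A unital ring is directly finite if `x * y = 1` implies `y * x = 1`. -/
def DirectlyFinite (R : Type*) [Ring R] : Prop :=
  ∀ x y : R, x * y = 1 → y * x = 1

/-- The action of `Γ` on the base group `Γ →₀ A` of the wreath product,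
given by `(g • f) x = f (g⁻¹ * x)`. -/
noncomputable def wreathAction (A : Type*) [AddCommGroup A] (Γ : Type*) [Group Γ] :
    Γ →* MulAut (Multiplicative (Γ →₀ A)) where
  toFun g := AddEquiv.toMultiplicative (Finsupp.domCongr (Equiv.mulLeft g))
  map_one' := by
    apply MulEquiv.ext
    intro f
    apply Multiplicative.toAdd.injective
    apply Finsupp.ext
    intro x
    simp [Finsupp.domCongr_apply]
    rfl
  map_mul' g₁ g₂ := by
    apply MulEquiv.ext
    intro f
    apply Multiplicative.toAdd.injective
    apply Finsupp.ext
    intro x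
    simp [Finsupp.domCongr_apply, mul_assoc]
    rfl

/-- The (restricted) wreath product `A ≀ Γ`: the semidirect product of the group
`Γ →₀ A` of finitely supported functions `Γ → A` (pointwise addition) by `Γ`,
acting by `(g • f) x = f (g⁻¹ * x)`. -/
abbrev WreathProduct (A : Type*) [AddCommGroup A] (Γ : Type*) [Group Γ] : Type _ :=
  SemidirectProduct (Multiplicative (Γ →₀ A)) Γ (wreathAction A Γ)

/-- The base group `Γ →₀ A` of the wreath product, as a subgroup of `A ≀ Γ`. -/
noncomputable def WreathProduct.base (A : Type*) [AddCommGroup A] (Γ : Type*) [Group Γ] :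
    Subgroup (WreathProduct A Γ) :=
  (SemidirectProduct.inl : Multiplicative (Γ →₀ A) →* WreathProduct A Γ).range

/-- A unital ring is stably finite if all its matrix rings are directly finite. -/
def StablyFinite (R : Type*) [Ring R] : Prop :=
  ∀ d : ℕ, 1 ≤ d → DirectlyFinite (Matrix (Fin d) (Fin d) R)


/-- Map coefficients of a monoid algebra along a ring hom. -/
noncomputable def SFaux.mapCoeff {R S : Type*} [Semiring R] [Semiring S] {Γ : Type*} [Monoid Γ]
    (φ : R →+* S) : MonoidAlgebra R Γ →+* MonoidAlgebra S Γ :=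
  MonoidAlgebra.liftNCRingHom (MonoidAlgebra.singleOneRingHom.comp φ) (MonoidAlgebra.of S Γ)
    (fun r g => by
      simp [Commute, SemiconjBy, MonoidAlgebra.single_mul_single])

lemma SFaux.mapCoeff_apply {R S : Type*} [Semiring R] [Semiring S] {Γ : Type*} [Monoid Γ]
    (φ : R →+* S) (x : MonoidAlgebra R Γ) (γ : Γ) : (mapCoeff φ x).coeff γ = φ (x.coeff γ) := by
  induction x using MonoidAlgebra.induction_linear with
  | zero => simp
  | add f g hf hg => rw [map_add]; rw [MonoidAlgebra.coeff_add, MonoidAlgebra.coeff_add, Finsupp.add_apply, Finsupp.add_apply, hf, hg, map_add]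
  | single a b =>
      have h1 : SFaux.mapCoeff φ (MonoidAlgebra.single a b)
          = MonoidAlgebra.single a (φ b) := by
        have := MonoidAlgebra.liftNC_single
          ((MonoidAlgebra.singleOneRingHom.comp φ : R →+* MonoidAlgebra S Γ) : R →+ MonoidAlgebra S Γ)
          (MonoidAlgebra.of S Γ) a b
        refine this.trans ?_
        simp only [RingHom.toAddMonoidHom_eq_coe, AddMonoidHom.coe_coe, RingHom.coe_comp,
          Function.comp_apply, MonoidAlgebra.singleOneRingHom_apply, MonoidAlgebra.of_apply,
          AddMonoidHom.toFun_eq_coe, Finsupp.singleAddHom_apply, MonoidAlgebra.singleAddHom_apply,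
          MonoidAlgebra.single_mul_single, one_mul, mul_one]
      classical
      rw [h1]
      rw [MonoidAlgebra.coeff_single, MonoidAlgebra.coeff_single,
          Finsupp.single_apply, Finsupp.single_apply, apply_ite φ, map_zero]

/-- The exchange map from the monoid algebra of a matrix ring to matrices over the
monoid algebra. -/
noncomputable def SFaux.swap {R : Type*} [Semiring R] {Γ : Type*} [Monoid Γ]
    (n : ℕ) : MonoidAlgebra (Matrix (Fin n) (Fin n) R) Γ →+*
      Matrix (Fin n) (Fin n) (MonoidAlgebra R Γ) :=
  MonoidAlgebra.liftNCRingHom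
    ((MonoidAlgebra.singleOneRingHom (R := R) (M := Γ)).mapMatrix)
    ((Matrix.scalar (Fin n)).toMonoidHom.comp (MonoidAlgebra.of R Γ))
    (fun M g => by
      ext i j
      simp only [RingHom.mapMatrix_apply, MonoidHom.coe_comp, RingHom.toMonoidHom_eq_coe,
        MonoidHom.coe_coe, Function.comp_apply, MonoidAlgebra.of_apply, Matrix.scalar_apply,
        Commute, SemiconjBy, Matrix.mul_diagonal, Matrix.diagonal_mul, Matrix.map_apply,
        MonoidAlgebra.singleOneRingHom_apply, MonoidAlgebra.single_mul_single, one_mul, mul_one]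
      simp [AddMonoidHom.toFun_eq_coe, Finsupp.singleAddHom_apply,
        MonoidAlgebra.single_mul_single])

lemma SFaux.swap_apply {R : Type*} [Semiring R] {Γ : Type*} [Monoid Γ] (n : ℕ)
    (x : MonoidAlgebra (Matrix (Fin n) (Fin n) R) Γ) (i j : Fin n) (γ : Γ) :
    (SFaux.swap n x i j).coeff γ = x.coeff γ i j := by
  induction x using MonoidAlgebra.induction_linear with
  | zero => simp
  | add f g hf hg =>
      rw [map_add, Matrix.add_apply, MonoidAlgebra.coeff_add, MonoidAlgebra.coeff_add, Finsupp.add_apply, Finsupp.add_apply, hf, hg,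
        Matrix.add_apply]
  | single a b =>
      classical
      have h1 : SFaux.swap n (MonoidAlgebra.single a b)
          = fun i j => MonoidAlgebra.single a (b i j) := by
        have := MonoidAlgebra.liftNC_single
          (((MonoidAlgebra.singleOneRingHom (R := R) (M := Γ)).mapMatrix :
              Matrix (Fin n) (Fin n) R →+* Matrix (Fin n) (Fin n) (MonoidAlgebra R Γ)) :
            Matrix (Fin n) (Fin n) R →+ Matrix (Fin n) (Fin n) (MonoidAlgebra R Γ))
          ((Matrix.scalar (Fin n)).toMonoidHom.comp (MonoidAlgebra.of R Γ)) a b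
        refine this.trans ?_
        ext i j
        simp only [RingHom.toAddMonoidHom_eq_coe, AddMonoidHom.coe_coe, RingHom.mapMatrix_apply,
          MonoidHom.coe_comp, RingHom.toMonoidHom_eq_coe, MonoidHom.coe_coe, Function.comp_apply,
          MonoidAlgebra.of_apply, Matrix.scalar_apply, Matrix.mul_diagonal, Matrix.map_apply,
          MonoidAlgebra.singleOneRingHom_apply, MonoidAlgebra.single_mul_single, one_mul, mul_one]
        simp [AddMonoidHom.toFun_eq_coe, Finsupp.singleAddHom_apply,
          MonoidAlgebra.single_mul_single]
      rw [h1]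
      rw [MonoidAlgebra.coeff_single, MonoidAlgebra.coeff_single,
          Finsupp.single_apply, Finsupp.single_apply]
      split <;> simp [Matrix.zero_apply]

lemma DirectlyFinite.of_injective {R S : Type*} [Ring R] [Ring S] (f : R →+* S)
    (hf : Function.Injective f) (hS : DirectlyFinite S) : DirectlyFinite R := by
  intro x y h
  apply hf
  rw [map_mul, map_one]
  exact hS _ _ (by rw [← map_mul, h, map_one])

lemma StablyFinite.of_injective {R S : Type*} [Ring R] [Ring S] (f : R →+* S)
    (hf : Function.Injective f) (hS : StablyFinite S) : StablyFinite R := by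
  intro d hd
  refine DirectlyFinite.of_injective f.mapMatrix ?_ (hS d hd)
  intro x y h
  ext i j
  have h2 := congrFun (congrFun h i) j
  simp only [RingHom.mapMatrix_apply, Matrix.map_apply] at h2
  exact hf h2

lemma StablyFinite.matrix {R : Type*} [Ring R] (hR : StablyFinite R) (n : ℕ) (hn : 1 ≤ n) :
    StablyFinite (Matrix (Fin n) (Fin n) R) := by
  intro d hd
  have e : Matrix (Fin d) (Fin d) (Matrix (Fin n) (Fin n) R) ≃+* Matrix (Fin (d*n)) (Fin (d*n)) R :=
    (Matrix.compRingEquiv (Fin d) (Fin n) R).trans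
      (Matrix.reindexAlgEquiv ℕ R finProdFinEquiv).toRingEquiv
  exact DirectlyFinite.of_injective e.toRingHom e.injective
    (hR (d*n) (Nat.one_le_iff_ne_zero.mpr (by positivity)))

lemma SFaux.mapCoeff_injective {R S : Type*} [Semiring R] [Semiring S] {Γ : Type*} [Monoid Γ]
    (φ : R →+* S) (hφ : Function.Injective φ) :
    Function.Injective (SFaux.mapCoeff (Γ := Γ) φ) := by
  intro x y h
  apply MonoidAlgebra.ext
  apply Finsupp.ext
  intro γ
  apply hφ
  rw [← SFaux.mapCoeff_apply, ← SFaux.mapCoeff_apply, h]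

lemma SFaux.stablyFinite_of_matrix_embed {Γ : Type*} [Group Γ] {R K : Type*} [Ring R] [Ring K]
    {n : ℕ} (hn : 1 ≤ n) (φ : K →+* Matrix (Fin n) (Fin n) R) (hφ : Function.Injective φ)
    (hR : StablyFinite (MonoidAlgebra R Γ)) : StablyFinite (MonoidAlgebra K Γ) := by
  have h1 := hR.matrix n hn
  refine StablyFinite.of_injective ((SFaux.swap n).comp (SFaux.mapCoeff φ)) ?_ h1
  intro x y h
  apply MonoidAlgebra.ext
  apply Finsupp.ext
  intro γ
  apply hφ
  ext i j
  have h2 := congrFun (congrFun (congrArg (fun M => (M : Matrix (Fin n) (Fin n) _)) h) i) j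
  have h3 := congrFun (congrArg (fun (f : MonoidAlgebra R Γ) => (f.coeff : Γ → R)) h2) γ
  simpa [RingHom.coe_comp, Function.comp_apply, SFaux.swap_apply, SFaux.mapCoeff_apply] using h3

lemma SFaux.stablyFinite_finite_field {Γ : Type*} [Group Γ] (p : ℕ) [Fact p.Prime]
    (K : Type*) [Field K] [Algebra (ZMod p) K] [Module.Finite (ZMod p) K]
    (hFp : StablyFinite (MonoidAlgebra (ZMod p) Γ)) :
    StablyFinite (MonoidAlgebra K Γ) := by
  set n := Module.finrank (ZMod p) K with hn
  have hn1 : 1 ≤ n := Module.finrank_pos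
  let b := Module.finBasis (ZMod p) K
  let φ : K →+* Matrix (Fin n) (Fin n) (ZMod p) :=
    ((algEquivMatrix b).toRingEquiv.toRingHom).comp (Algebra.lmul (ZMod p) K).toRingHom
  have hφ : Function.Injective φ := by
    refine (algEquivMatrix b).toRingEquiv.injective.comp ?_
    intro x y h
    have := congrArg (fun f => (f : K →ₗ[ZMod p] K) 1) h
    simpa using this
  exact SFaux.stablyFinite_of_matrix_embed hn1 φ hφ hFp


lemma SFaux.mapMatrix_injective {R S : Type*} [Semiring R] [Semiring S] {d : ℕ}
    (f : R →+* S) (hf : Function.Injective f) :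
    Function.Injective (f.mapMatrix : Matrix (Fin d) (Fin d) R →+* Matrix (Fin d) (Fin d) S) := by
  intro x y h
  ext i j
  have h2 := congrFun (congrFun h i) j
  simp only [RingHom.mapMatrix_apply, Matrix.map_apply] at h2
  exact hf h2


/-- Let `Γ` be a group, `p` a prime and `F` a field of characteristic `p`.
Then `F[Γ]` is stably finite iff `𝔽_p[Γ]` is stably finite. -/
theorem stablyFinite_groupRing_iff_stablyFinite_Fp (Γ : Type*) [Group Γ]
    (p : ℕ) (hp : p.Prime) (F : Type*) [Field F] [CharP F p] :
    StablyFinite (MonoidAlgebra F Γ) ↔ StablyFinite (MonoidAlgebra (ZMod p) Γ) := by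
  haveI : Fact p.Prime := ⟨hp⟩
  letI : Algebra (ZMod p) F := ZMod.algebra _ _
  constructor
  · intro hF
    exact StablyFinite.of_injective (SFaux.mapCoeff (algebraMap (ZMod p) F))
      (SFaux.mapCoeff_injective _ (algebraMap (ZMod p) F).injective) hF
  · intro hFp d hd X Y hXY
    classical
    set s : Finset F := Finset.univ.biUnion
      (fun ij : Fin d × Fin d => (X ij.1 ij.2).coeff.frange ∪ (Y ij.1 ij.2).coeff.frange) with hs
    set A : Subalgebra (ZMod p) F := Algebra.adjoin (ZMod p) (↑s : Set F) with hA
    have hXA : ∀ i j γ, (X i j).coeff γ ∈ A := by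
      intro i j γ
      by_cases h : (X i j).coeff γ = 0
      · rw [h]; exact zero_mem A
      · apply Algebra.subset_adjoin
        refine Finset.mem_coe.2 (Finset.mem_biUnion.2 ⟨(i, j), Finset.mem_univ _, ?_⟩)
        exact Finset.mem_union_left _ (Finsupp.mem_frange.2 ⟨h, γ, rfl⟩)
    have hYA : ∀ i j γ, (Y i j).coeff γ ∈ A := by
      intro i j γ
      by_cases h : (Y i j).coeff γ = 0
      · rw [h]; exact zero_mem A
      · apply Algebra.subset_adjoin
        refine Finset.mem_coe.2 (Finset.mem_biUnion.2 ⟨(i, j), Finset.mem_univ _, ?_⟩)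
        exact Finset.mem_union_right _ (Finsupp.mem_frange.2 ⟨h, γ, rfl⟩)
    let X' : Matrix (Fin d) (Fin d) (MonoidAlgebra A Γ) := fun i j =>
      MonoidAlgebra.ofCoeff (Finsupp.onFinset (X i j).coeff.support (fun γ => ⟨(X i j).coeff γ, hXA i j γ⟩)
        (fun γ h => Finsupp.mem_support_iff.2 (fun h0 => h (Subtype.ext h0))))
    let Y' : Matrix (Fin d) (Fin d) (MonoidAlgebra A Γ) := fun i j =>
      MonoidAlgebra.ofCoeff (Finsupp.onFinset (Y i j).coeff.support (fun γ => ⟨(Y i j).coeff γ, hYA i j γ⟩)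
        (fun γ h => Finsupp.mem_support_iff.2 (fun h0 => h (Subtype.ext h0))))
    let Φ : MonoidAlgebra A Γ →+* MonoidAlgebra F Γ := SFaux.mapCoeff A.val.toRingHom
    have hΦinj : Function.Injective Φ :=
      SFaux.mapCoeff_injective _ (fun x y h => Subtype.ext h)
    have hMX : Φ.mapMatrix X' = X := by
      ext i j γ
      rw [RingHom.mapMatrix_apply, Matrix.map_apply]
      rw [show (Φ (X' i j)).coeff γ = A.val.toRingHom ((X' i j).coeff γ) from SFaux.mapCoeff_apply _ _ _]
      rfl
    have hMY : Φ.mapMatrix Y' = Y := by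
      ext i j γ
      rw [RingHom.mapMatrix_apply, Matrix.map_apply]
      rw [show (Φ (Y' i j)).coeff γ = A.val.toRingHom ((Y' i j).coeff γ) from SFaux.mapCoeff_apply _ _ _]
      rfl
    have hX'Y' : X' * Y' = 1 := by
      apply SFaux.mapMatrix_injective Φ hΦinj
      rw [map_mul, hMX, hMY, hXY, map_one]
    haveI : Algebra.FiniteType (ZMod p) A :=
      (Subalgebra.fg_iff_finiteType _).1 (Subalgebra.fg_adjoin_finset s)
    haveI : IsJacobsonRing A := isJacobsonRing_of_finiteType (A := ZMod p)
    have key : Y' * X' = 1 := by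
      ext i j γ
      by_contra hc
      set c : A := ((Y' * X') i j).coeff γ - ((1 : Matrix (Fin d) (Fin d) (MonoidAlgebra A Γ)) i j).coeff γ
        with hcdef
      have hcne : c ≠ 0 := fun h => hc (congrArg Subtype.val (sub_eq_zero.1 h))
      have hjac : ((⊥ : Ideal A).jacobson = ⊥) :=
        isJacobsonRing_iff.mp ‹IsJacobsonRing ↥A› ⊥ (Ideal.bot_prime.isRadical)
      have hcnotbot : c ∉ (⊥ : Ideal A) := by simpa [Ideal.mem_bot] using hcne
      rw [← hjac, Ideal.jacobson, Ideal.mem_sInf] at hcnotbot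
      push_neg at hcnotbot
      obtain ⟨m, ⟨-, hmax⟩, hcm⟩ := hcnotbot
      haveI := hmax
      letI : Field (A ⧸ m) := Ideal.Quotient.field m
      haveI : Algebra.FiniteType (ZMod p) (A ⧸ m) :=
        Algebra.FiniteType.of_surjective
          (Ideal.Quotient.mkₐ (ZMod p) m) (Ideal.Quotient.mkₐ_surjective _ _)
      haveI : Module.Finite (ZMod p) (A ⧸ m) :=
        finite_of_finite_type_of_isJacobsonRing (ZMod p) (A ⧸ m)
      have hK := SFaux.stablyFinite_finite_field p (A ⧸ m) hFp
      set Ψ : MonoidAlgebra A Γ →+* MonoidAlgebra (A ⧸ m) Γ :=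
        SFaux.mapCoeff (Ideal.Quotient.mk m) with hΨ
      have h1 : Ψ.mapMatrix X' * Ψ.mapMatrix Y' = 1 := by
        rw [← map_mul, hX'Y', map_one]
      have h2 := hK d hd _ _ h1
      rw [← map_mul, show (1 : Matrix (Fin d) (Fin d) (MonoidAlgebra (A ⧸ m) Γ))
        = Ψ.mapMatrix 1 from (map_one _).symm] at h2
      have h3 : Ψ ((Y' * X') i j) = Ψ ((1 : Matrix (Fin d) (Fin d) (MonoidAlgebra A Γ)) i j) := by
        have h4 := congrFun (congrFun h2 i) j
        simpa only [RingHom.mapMatrix_apply, Matrix.map_apply] using h4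
      have h5 : Ideal.Quotient.mk m (((Y' * X') i j).coeff γ)
          = Ideal.Quotient.mk m (((1 : Matrix (Fin d) (Fin d) (MonoidAlgebra A Γ)) i j).coeff γ) := by
        rw [← SFaux.mapCoeff_apply, ← SFaux.mapCoeff_apply]
        exact congrFun (congrArg (fun f : MonoidAlgebra (A ⧸ m) Γ => (f.coeff : Γ → A ⧸ m)) h3) γ
      exact hcm (Ideal.Quotient.eq.1 h5)
    have : Φ.mapMatrix (Y' * X') = 1 := by rw [key, map_one]
    rw [map_mul, hMX, hMY] at this
    exact this
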